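/- Let X be a finite set of n points in ℝ^d. Then there exists a point q ∈ ℝ^d such that every closed halfspace of ℝ^d containing q contains at least n/(d+1) points of X; that is, the Tukey depth satisfies τ_X(q) ≥ 1/(d+1). -/

import Mathlib

open scoped Classical

/-- **Centerpoint theorem for Tukey depth** (Rado): there exists a point `q` such that
every closed halfspace containing `q` contains at least `n/(d+1)` points of `X`, i.e.
`τ_X(q) ≥ 1/(d+1)`. -/
theorem centerpoint_tukey (d : ℕ) (X : Finset (EuclideanSpace ℝ (Fin d))) :
    ∃ q : EuclideanSpace ℝ (Fin d),
      ∀ v : EuclideanSpace ℝ (Fin d), v ≠ 0 → ∀ c : ℝ, c ≤ (inner ℝ v q : ℝ) →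
        (X.card : ℝ) / (d + 1) ≤ ((X.filter fun x => c ≤ (inner ℝ v x : ℝ)).card : ℝ) := by
  classical
  rcases X.eq_empty_or_nonempty with rfl | hXne
  · refine ⟨0, fun v _ c _ => ?_⟩
    simp
  have hnpos : 0 < X.card := Finset.card_pos.mpr hXne
  -- the family of "large" subsets of X
  let 𝒴 : Finset (Finset (EuclideanSpace ℝ (Fin d))) :=
    X.powerset.filter (fun Y => (d + 1) * (X \ Y).card < X.card)
  have hmem : ∀ Y ∈ 𝒴, Y ⊆ X ∧ (d + 1) * (X \ Y).card < X.card := by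
    intro Y hY
    rw [Finset.mem_filter, Finset.mem_powerset] at hY
    exact hY
  -- every subfamily of size ≤ d+1 has a common point of X
  have hinter : ∀ I ⊆ 𝒴, I.card ≤ d + 1 → ∃ x ∈ X, ∀ Y ∈ I, x ∈ Y := by
    intro I hI hIcard
    by_contra h
    push_neg at h
    have hsub : X ⊆ I.biUnion (fun Y => X \ Y) := by
      intro x hx
      obtain ⟨Y, hY, hxY⟩ := h x hx
      exact Finset.mem_biUnion.mpr ⟨Y, hY, Finset.mem_sdiff.mpr ⟨hx, hxY⟩⟩
    have hle : X.card ≤ ∑ Y ∈ I, (X \ Y).card :=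
      le_trans (Finset.card_le_card hsub) (Finset.card_biUnion_le)
    have hsum : (d + 1) * ∑ Y ∈ I, (X \ Y).card ≤ I.card * (X.card - 1) := by
      rw [Finset.mul_sum]
      calc ∑ Y ∈ I, (d + 1) * (X \ Y).card ≤ ∑ _Y ∈ I, (X.card - 1) := by
            apply Finset.sum_le_sum
            intro Y hY
            have := (hmem Y (hI hY)).2
            omega
        _ = I.card * (X.card - 1) := by rw [Finset.sum_const, smul_eq_mul]
    have h2 : I.card * (X.card - 1) ≤ (d + 1) * (X.card - 1) :=
      Nat.mul_le_mul_right _ hIcard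
    have h3 : (d + 1) * X.card ≤ (d + 1) * (X.card - 1) :=
      le_trans (Nat.mul_le_mul_left _ hle) (le_trans hsum h2)
    have h4 : (d + 1) * (X.card - 1) < (d + 1) * X.card :=
      mul_lt_mul_of_pos_left (Nat.sub_lt hnpos one_pos) (Nat.succ_pos d)
    exact absurd h3 (not_le.mpr h4)
  -- apply Helly's theorem
  have hfin : Module.finrank ℝ (EuclideanSpace ℝ (Fin d)) = d := finrank_euclideanSpace_fin
  have hHelly : (⋂ Y ∈ 𝒴, convexHull ℝ (↑Y : Set (EuclideanSpace ℝ (Fin d)))).Nonempty := by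
    apply Convex.helly_theorem' (𝕜 := ℝ)
    · intro Y _
      exact convex_convexHull ℝ _
    · intro I hI hIcard
      rw [hfin] at hIcard
      obtain ⟨x, _, hx⟩ := hinter I hI hIcard
      exact ⟨x, Set.mem_iInter₂.mpr fun Y hY =>
        subset_convexHull ℝ _ (Finset.mem_coe.mpr (hx Y hY))⟩
  obtain ⟨q, hq⟩ := hHelly
  rw [Set.mem_iInter₂] at hq
  refine ⟨q, fun v _ c hc => ?_⟩
  have hcard : X.card ≤ (d + 1) * (X.filter fun x => c ≤ (inner ℝ v x : ℝ)).card := by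
    by_contra h
    push_neg at h
    have hXZ : X \ (X.filter (fun x => ¬ c ≤ (inner ℝ v x : ℝ)))
        = X.filter (fun x => c ≤ (inner ℝ v x : ℝ)) := by
      rw [Finset.sdiff_eq_filter]
      apply Finset.filter_congr
      intro x hx
      simp [Finset.mem_filter, hx]
    have hZmem : (X.filter (fun x => ¬ c ≤ (inner ℝ v x : ℝ))) ∈ 𝒴 := by
      rw [Finset.mem_filter, Finset.mem_powerset, hXZ]
      exact ⟨Finset.filter_subset _ _, h⟩
    have hqZ : q ∈ convexHull ℝ
        (↑(X.filter (fun x => ¬ c ≤ (inner ℝ v x : ℝ))) : Set (EuclideanSpace ℝ (Fin d))) :=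
      hq _ hZmem
    have hconv : Convex ℝ {x : EuclideanSpace ℝ (Fin d) | (inner ℝ v x : ℝ) < c} := by
      apply convex_halfSpace_lt
      exact ⟨fun a b => inner_add_right v a b, fun r a => real_inner_smul_right v a r⟩
    have hsubset : (↑(X.filter (fun x => ¬ c ≤ (inner ℝ v x : ℝ))) :
        Set (EuclideanSpace ℝ (Fin d))) ⊆ {x | (inner ℝ v x : ℝ) < c} := by
      intro x hx
      rw [Finset.mem_coe, Finset.mem_filter] at hx
      exact lt_of_not_ge hx.2
    have : (inner ℝ v q : ℝ) < c := convexHull_min hsubset hconv hqZ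
    linarith
  have hd : (0 : ℝ) < (d : ℝ) + 1 := by positivity
  rw [div_le_iff₀ hd]
  have : (X.card : ℝ) ≤ ((d : ℝ) + 1) * (X.filter fun x => c ≤ (inner ℝ v x : ℝ)).card := by
    exact_mod_cast hcard
  linarith
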